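/- Let J_t be the 3-graph on t+1 vertices consisting of a center vertex v₀ and t other vertices, whose edges are all triples containing v₀ (the full star). For each s ≥ 1, t ≥ 3, and sufficiently large n, the maximum number of edges in an n-vertex 3-graph that is J_t-free and has matching number at most s is s·t(n−s, t−1) + O(n). -/

import Mathlib

open Finset

/-- Degree of a vertex in a 3-graph. -/
def degH {n : ℕ} (H : Finset (Finset (Fin n))) (v : Fin n) : ℕ :=
  (H.filter (fun e => v ∈ e)).card

/-- `H` is a 3-uniform hypergraph. -/
def Uniform3 {n : ℕ} (H : Finset (Finset (Fin n))) : Prop :=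
  ∀ e ∈ H, e.card = 3

/-- The matching number of `H` is at most `s`. -/
def MatchingAtMost {n : ℕ} (H : Finset (Finset (Fin n))) (s : ℕ) : Prop :=
  ∀ M ⊆ H, (M : Set (Finset (Fin n))).Pairwise (fun e f => Disjoint e f) → M.card ≤ s

/-- `H` contains a copy of the hypergraph with edge set `F`. -/
def HasCopy {α : Type*} [DecidableEq α] {n : ℕ}
    (F : Set (Finset α)) (H : Finset (Finset (Fin n))) : Prop :=
  ∃ f : α → Fin n, Function.Injective f ∧ ∀ e ∈ F, e.image f ∈ H

/-- Number of edges of the Turán graph `T(n, r)`. -/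
def turanEdges (n r : ℕ) : ℕ := (SimpleGraph.turanGraph n r).edgeFinset.card

/-- Edge set of the full star `J_t` on `Fin (t+1)` with center `0`. -/
def JtEdges (t : ℕ) : Set (Finset (Fin (t + 1))) :=
  { e | ∃ i j : Fin (t + 1), i ≠ 0 ∧ j ≠ 0 ∧ i ≠ j ∧ e = {0, i, j} }

namespace Aux9

variable {n : ℕ}

/-- edges meeting D are at most the sum of degrees over D -/
lemma edges_meeting_le (H : Finset (Finset (Fin n))) (D : Finset (Fin n)) :
    (H.filter (fun e => ∃ v ∈ D, v ∈ e)).card ≤ ∑ v ∈ D, degH H v := by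
  have hsub : H.filter (fun e => ∃ v ∈ D, v ∈ e) ⊆
      D.biUnion (fun v => H.filter (fun e => v ∈ e)) := by
    intro e he
    rw [mem_filter] at he
    obtain ⟨heH, v, hvD, hve⟩ := he
    exact mem_biUnion.2 ⟨v, hvD, mem_filter.2 ⟨heH, hve⟩⟩
  calc (H.filter (fun e => ∃ v ∈ D, v ∈ e)).card
      ≤ (D.biUnion (fun v => H.filter (fun e => v ∈ e))).card := card_le_card hsub
    _ ≤ ∑ v ∈ D, degH H v := card_biUnion_le

/-- codegree bound -/
lemma codeg_le (H : Finset (Finset (Fin n))) (hU : Uniform3 H) (v x : Fin n) (hvx : v ≠ x) :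
    (H.filter (fun e => v ∈ e ∧ x ∈ e)).card ≤ n := by
  have := card_le_card_of_injOn
    (fun e => if h : (e \ {v, x}).Nonempty then (e \ {v, x}).min' h else v)
    (s := H.filter (fun e => v ∈ e ∧ x ∈ e)) (t := (univ : Finset (Fin n)))
    (fun a _ => mem_univ _) ?_
  · simpa using this
  · intro e₁ he₁ e₂ he₂ hf
    simp only [coe_filter, Set.mem_setOf_eq, mem_coe, mem_filter] at he₁ he₂
    have key : ∀ e : Finset (Fin n), e ∈ H → v ∈ e → x ∈ e →
        ∃ h : (e \ {v, x}).Nonempty, e = {v, x, (e \ {v, x}).min' h} := by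
      intro e heH hv hx
      have hsub : ({v, x} : Finset (Fin n)) ⊆ e := by
        intro y hy; simp at hy; rcases hy with rfl | rfl <;> assumption
      have hc2 : ({v, x} : Finset (Fin n)).card = 2 := by
        rw [card_insert_of_notMem (by simpa using hvx), card_singleton]
      have hcd : (e \ {v, x}).card = 1 := by
        rw [card_sdiff_of_subset hsub, hU e heH, hc2]
      have hne : (e \ {v, x}).Nonempty := by
        rw [← card_pos, hcd]; norm_num
      refine ⟨hne, ?_⟩
      have hw := (e \ {v, x}).min'_mem hne
      rw [mem_sdiff] at hw
      have hwv : (e \ {v, x}).min' hne ≠ v := by intro h; apply hw.2; simp [h]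
      have hwx : (e \ {v, x}).min' hne ≠ x := by intro h; apply hw.2; simp [h]
      refine (eq_of_subset_of_card_le ?_ ?_).symm
      · intro y hy; simp at hy; rcases hy with rfl | rfl | rfl
        · exact hv
        · exact hx
        · exact hw.1
      · rw [hU e heH]
        rw [card_insert_of_notMem (by simp [hvx, Ne.symm hwv]),
          card_insert_of_notMem (by simp [Ne.symm hwx]), card_singleton]
    obtain ⟨h₁, hk₁⟩ := key e₁ he₁.1 he₁.2.1 he₁.2.2
    obtain ⟨h₂, hk₂⟩ := key e₂ he₂.1 he₂.2.1 he₂.2.2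
    simp only [dif_pos h₁, dif_pos h₂] at hf
    rw [hk₁, hk₂, hf]

/-- pick an edge through a high-degree vertex avoiding a small forbidden set -/
lemma pick_edge (H : Finset (Finset (Fin n))) (hU : Uniform3 H) (K : ℕ)
    (v : Fin n) (hv : K * n ≤ degH H v) (F : Finset (Fin n)) (hvF : v ∉ F)
    (hF : F.card < K) : ∃ e ∈ H, v ∈ e ∧ ∀ x ∈ F, x ∉ e := by
  classical
  set A := H.filter (fun e => v ∈ e) with hA
  set B := A.filter (fun e => ∃ x ∈ F, x ∈ e) with hB
  have hBsub : B ⊆ F.biUnion (fun x => H.filter (fun e => v ∈ e ∧ x ∈ e)) := by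
    intro e he
    rw [hB, mem_filter] at he
    obtain ⟨heA, x, hxF, hxe⟩ := he
    rw [hA, mem_filter] at heA
    exact mem_biUnion.2 ⟨x, hxF, mem_filter.2 ⟨heA.1, heA.2, hxe⟩⟩
  have hBcard : B.card ≤ F.card * n := by
    calc B.card ≤ (F.biUnion (fun x => H.filter (fun e => v ∈ e ∧ x ∈ e))).card :=
          card_le_card hBsub
      _ ≤ ∑ x ∈ F, (H.filter (fun e => v ∈ e ∧ x ∈ e)).card := card_biUnion_le
      _ ≤ ∑ _x ∈ F, n := by
          refine Finset.sum_le_sum ?_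
          intro x hxF
          exact codeg_le H hU v x (fun h => hvF (h ▸ hxF))
      _ = F.card * n := by rw [Finset.sum_const, smul_eq_mul]
  have hnpos : 0 < n := v.pos
  have hlt : B.card < A.card := by
    calc B.card ≤ F.card * n := hBcard
      _ < K * n := (Nat.mul_lt_mul_right hnpos).2 hF
      _ ≤ A.card := hv
  have hne : (A \ B).Nonempty := by
    rw [← card_pos]
    have := card_le_card (inter_subset_left (s₁ := A) (s₂ := B))
    have hcs : A.card - B.card ≤ (A \ B).card := le_card_sdiff B A
    omega
  obtain ⟨e, he⟩ := hne
  rw [mem_sdiff] at he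
  obtain ⟨heA, heB⟩ := he
  rw [hA, mem_filter] at heA
  refine ⟨e, heA.1, heA.2, ?_⟩
  intro x hxF hxe
  exact heB (by rw [hB, mem_filter]; exact ⟨by rw [hA, mem_filter]; exact heA, x, hxF, hxe⟩)

end Aux9

namespace Aux9

variable {n : ℕ}

lemma greedy (H : Finset (Finset (Fin n))) (hU : Uniform3 H) (K : ℕ)
    (L : Finset (Fin n)) :
    ∀ M : Finset (Finset (Fin n)), (∀ v ∈ L, K * n ≤ degH H v) → M ⊆ H →
    (M : Set (Finset (Fin n))).Pairwise (fun e f => Disjoint e f) →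
    (∀ e ∈ M, ∀ v ∈ L, v ∉ e) → 3 * M.card + 3 * L.card < K →
    ∃ M', M ⊆ M' ∧ M' ⊆ H ∧
      (M' : Set (Finset (Fin n))).Pairwise (fun e f => Disjoint e f) ∧
      M'.card = M.card + L.card := by
  classical
  induction L using Finset.induction_on with
  | empty =>
    intro M _ hMH hMp _ _
    exact ⟨M, Finset.Subset.refl M, hMH, hMp, by simp⟩
  | @insert a L haL ih =>
    intro M hdeg hMH hMp hav hcard
    -- forbidden set
    set F := (M.biUnion id) ∪ L with hF
    have haF : a ∉ F := by
      rw [hF, mem_union]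
      rintro (h | h)
      · obtain ⟨e, heM, hae⟩ := mem_biUnion.1 h
        exact hav e heM a (mem_insert_self a L) hae
      · exact haL h
    have hFcard : F.card < K := by
      have h1 : (M.biUnion id).card ≤ ∑ e ∈ M, e.card := card_biUnion_le
      have h2 : ∑ e ∈ M, (id e).card = ∑ _e ∈ M, 3 := by
        refine Finset.sum_congr rfl ?_
        intro e heM; exact hU e (hMH heM)
      have h3 : (M.biUnion id).card ≤ 3 * M.card := by
        calc (M.biUnion id).card ≤ ∑ e ∈ M, (id e).card := card_biUnion_le
          _ = 3 * M.card := by rw [h2, Finset.sum_const, smul_eq_mul, Nat.mul_comm]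
      have h4 : F.card ≤ (M.biUnion id).card + L.card := card_union_le _ _
      have h5 : (insert a L).card = L.card + 1 := card_insert_of_notMem haL
      omega
    obtain ⟨e, heH, hae, hee⟩ := pick_edge H hU K a
      (hdeg a (mem_insert_self a L)) F haF hFcard
    have heM : e ∉ M := by
      intro h
      exact hav e h a (mem_insert_self a L) hae
    have hdisj : ∀ f ∈ M, Disjoint e f := by
      intro f hfM
      rw [Finset.disjoint_left]
      intro x hxe hxf
      exact hee x (mem_union.2 (Or.inl (mem_biUnion.2 ⟨f, hfM, hxf⟩))) hxe
    have hpnew : ((insert e M : Finset (Finset (Fin n))) : Set (Finset (Fin n))).Pairwise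
        (fun e f => Disjoint e f) := by
      rw [coe_insert]
      apply hMp.insert
      intro f hfM _
      exact ⟨hdisj f hfM, (hdisj f hfM).symm⟩
    have havnew : ∀ f ∈ insert e M, ∀ v ∈ L, v ∉ f := by
      intro f hf v hvL
      rcases mem_insert.1 hf with rfl | hfM
      · exact fun hvf => hee v (mem_union.2 (Or.inr hvL)) hvf
      · exact hav f hfM v (mem_insert_of_mem hvL)
    have hcardnew : 3 * (insert e M).card + 3 * L.card < K := by
      rw [card_insert_of_notMem heM]
      have h5 : (insert a L).card = L.card + 1 := card_insert_of_notMem haL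
      omega
    obtain ⟨M', hMM', hM'H, hM'p, hM'c⟩ := ih (insert e M)
      (fun v hv => hdeg v (mem_insert_of_mem hv))
      (insert_subset heH hMH) hpnew havnew hcardnew
    refine ⟨M', fun f hf => hMM' (mem_insert_of_mem hf), hM'H, hM'p, ?_⟩
    rw [hM'c, card_insert_of_notMem heM, card_insert_of_notMem haL]
    omega

end Aux9

namespace Aux9

variable {n : ℕ}

def pairFinset {α : Type*} [DecidableEq α] (z : Sym2 α) : Finset α :=
  Sym2.lift ⟨fun a b => {a, b}, fun a b => Finset.pair_comm a b⟩ z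

@[simp] lemma pairFinset_mk {α : Type*} [DecidableEq α] (a b : α) :
    pairFinset s(a, b) = {a, b} := rfl

def link (H : Finset (Finset (Fin n))) (v : Fin n) : SimpleGraph (Fin n) where
  Adj u w := u ≠ w ∧ ({v, u, w} : Finset (Fin n)) ∈ H
  symm := ⟨by
    intro u w ⟨h1, h2⟩
    refine ⟨h1.symm, ?_⟩
    have : ({v, w, u} : Finset (Fin n)) = {v, u, w} := by ext x; simp; tauto
    rwa [this]⟩
  loopless := ⟨fun u h => h.1 rfl⟩

instance (H : Finset (Finset (Fin n))) (v : Fin n) : DecidableRel (link H v).Adj :=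
  fun u w => inferInstanceAs (Decidable (u ≠ w ∧ _))

lemma link_cliqueFree {t : ℕ} (ht : 3 ≤ t) (H : Finset (Finset (Fin n)))
    (hU : Uniform3 H) (hC : ¬ HasCopy (JtEdges t) H) (v : Fin n) :
    (link H v).CliqueFree t := by
  intro Q hQ
  apply hC
  have hvQ : v ∉ Q := by
    intro hvQ
    obtain ⟨w, hwQ, hwv⟩ := Finset.exists_mem_ne (by rw [hQ.2]; omega : 1 < Q.card) v
    have hadj : (link H v).Adj v w := hQ.1 hvQ hwQ (Ne.symm hwv)
    have hmem : ({v, v, w} : Finset (Fin n)) ∈ H := hadj.2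
    have : ({v, v, w} : Finset (Fin n)).card = 3 := hU _ hmem
    have h2 : ({v, v, w} : Finset (Fin n)) = {v, w} := by
      rw [Finset.insert_idem]
    rw [h2] at this
    have := Finset.card_insert_le v ({w} : Finset (Fin n))
    simp_all
  have hpos : 0 < t + 1 := by omega
  set oiso := Q.orderIsoOfFin hQ.2 with hoiso
  set f : Fin (t + 1) → Fin n := fun i =>
    if h : i.val = 0 then v else (oiso ⟨i.val - 1, by have := i.isLt; omega⟩ : Fin n) with hf
  have hf0 : f 0 = v := by simp [hf]
  have hfi : ∀ i : Fin (t + 1), i ≠ 0 → (f i) ∈ Q ∧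
      f i = (oiso ⟨i.val - 1, by have := i.isLt; omega⟩ : Fin n) := by
    intro i hi
    have hv : i.val ≠ 0 := fun h => hi (Fin.ext h)
    constructor
    · simp only [hf, dif_neg hv]
      exact (oiso ⟨i.val - 1, by have := i.isLt; omega⟩).2
    · simp only [hf, dif_neg hv]
  have hinj : Function.Injective f := by
    intro i j hij
    by_cases hi : i = 0
    · by_cases hj : j = 0
      · rw [hi, hj]
      · exfalso
        rw [hi, hf0] at hij
        exact hvQ (hij ▸ (hfi j hj).1)
    · by_cases hj : j = 0
      · exfalso
        rw [hj, hf0] at hij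
        exact hvQ (hij ▸ (hfi i hi).1)
      · rw [(hfi i hi).2, (hfi j hj).2] at hij
        have := oiso.injective (Subtype.coe_injective hij)
        have hvi : i.val ≠ 0 := fun h => hi (Fin.ext h)
        have hvj : j.val ≠ 0 := fun h => hj (Fin.ext h)
        have h2 : i.val - 1 = j.val - 1 := congrArg Fin.val this
        apply Fin.ext
        omega
  refine ⟨f, hinj, ?_⟩
  rintro e ⟨i, j, hi, hj, hij, rfl⟩
  have himg : ({0, i, j} : Finset (Fin (t + 1))).image f = {v, f i, f j} := by
    simp only [Finset.image_insert, Finset.image_singleton, hf0]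
  rw [himg]
  have hne : f i ≠ f j := fun h => hij (hinj h)
  have hadj : (link H v).Adj (f i) (f j) := hQ.1 (hfi i hi).1 (hfi j hj).1 hne
  exact hadj.2

lemma degH_le_turan {t : ℕ} (ht : 3 ≤ t) (H : Finset (Finset (Fin n)))
    (hU : Uniform3 H) (hC : ¬ HasCopy (JtEdges t) H) (v : Fin n) :
    degH H v ≤ turanEdges n (t - 1) := by
  classical
  have h1 : degH H v ≤ (link H v).edgeFinset.card := by
    apply card_le_card_of_surjOn (fun z => insert v (pairFinset z))
    intro e he
    simp only [mem_coe, mem_filter] at he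
    obtain ⟨heH, hve⟩ := he
    have hc : (e.erase v).card = 2 := by
      rw [Finset.card_erase_of_mem hve, hU e heH]
    obtain ⟨a, b, hab, habe⟩ := Finset.card_eq_two.1 hc
    have haQ : a ∈ e.erase v := habe ▸ Finset.mem_insert_self a {b}
    have hbQ : b ∈ e.erase v := habe ▸ Finset.mem_insert_of_mem (Finset.mem_singleton_self b)
    have hmem : ({v, a, b} : Finset (Fin n)) = e := by
      rw [show ({v, a, b} : Finset (Fin n)) = insert v {a, b} from rfl, ← habe,
        Finset.insert_erase hve]
    refine ⟨s(a, b), ?_, ?_⟩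
    · simp only [mem_coe, SimpleGraph.mem_edgeFinset, SimpleGraph.mem_edgeSet]
      exact ⟨hab, hmem ▸ heH⟩
    · simp only [pairFinset_mk]
      exact hmem
  have h2 : (link H v).edgeFinset.card ≤ turanEdges n (t - 1) := by
    have htm := SimpleGraph.isTuranMaximal_turanGraph (n := n) (r := t - 1) (by omega)
    have hcf : (link H v).CliqueFree (t - 1 + 1) := by
      rw [show t - 1 + 1 = t by omega]
      exact link_cliqueFree ht H hU hC v
    exact htm.2 hcf
  exact le_trans h1 h2

end Aux9

namespace Aux9

variable {n : ℕ}

lemma card_filter_lt (m : ℕ) (hmn : m ≤ n) :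
    ((univ : Finset (Fin n)).filter (fun x => x.val < m)).card = m := by
  apply le_antisymm
  · have := card_le_card_of_injOn (fun x : Fin n => (x.val : ℕ))
      (s := (univ : Finset (Fin n)).filter (fun x => x.val < m)) (t := Finset.range m)
      ?_ ?_
    · simpa using this
    · intro x hx
      rw [mem_coe, mem_filter] at hx
      exact Finset.mem_range.2 hx.2
    · intro x _ y _ h
      exact Fin.ext h
  · have := card_le_card_of_injOn (fun y : Fin m => (Fin.castLE hmn y))
      (s := (univ : Finset (Fin m))) (t := (univ : Finset (Fin n)).filter (fun x => x.val < m))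
      ?_ ?_
    · simpa using this
    · intro y _
      rw [mem_coe, mem_filter]
      exact ⟨mem_univ _, y.isLt⟩
    · intro x _ y _ h
      exact Fin.castLE_injective hmn h

lemma turanEdges_le (r m : ℕ) (hm : 0 < m) (hmn : m ≤ n) :
    turanEdges n r ≤ turanEdges m r + (n - m) * n := by
  classical
  set G := SimpleGraph.turanGraph n r with hG
  set P : Sym2 (Fin n) → Prop := fun z => ∀ x ∈ z, x.val < m with hP
  have hsplit : (G.edgeFinset.filter P).card + (G.edgeFinset.filter (fun z => ¬ P z)).card
      = G.edgeFinset.card := card_filter_add_card_filter_not (p := P)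
  have h1 : (G.edgeFinset.filter P).card ≤ turanEdges m r := by
    have hsub : G.edgeFinset.filter P ⊆
        (SimpleGraph.turanGraph m r).edgeFinset.image (Sym2.map (Fin.castLE hmn)) := by
      intro z hz
      rw [mem_filter] at hz
      obtain ⟨hze, hzP⟩ := hz
      revert hze hzP
      induction z using Sym2.ind with
      | _ a b =>
        intro hze hzP
        have ha : a.val < m := hzP a (by simp [Sym2.mem_iff])
        have hb : b.val < m := hzP b (by simp [Sym2.mem_iff])
        have hadj : G.Adj a b := by
          rwa [SimpleGraph.mem_edgeFinset, SimpleGraph.mem_edgeSet] at hze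
        refine Finset.mem_image.2 ⟨s(⟨a.val, ha⟩, ⟨b.val, hb⟩), ?_, ?_⟩
        · rw [SimpleGraph.mem_edgeFinset, SimpleGraph.mem_edgeSet]
          exact hadj
        · rw [Sym2.map_pair_eq]
          congr 1 <;> apply Fin.ext <;> rfl
    calc (G.edgeFinset.filter P).card
        ≤ ((SimpleGraph.turanGraph m r).edgeFinset.image (Sym2.map (Fin.castLE hmn))).card :=
          card_le_card hsub
      _ ≤ (SimpleGraph.turanGraph m r).edgeFinset.card := card_image_le
      _ = turanEdges m r := rfl
  have h2 : (G.edgeFinset.filter (fun z => ¬ P z)).card ≤ (n - m) * n := by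
    set bigs := (univ : Finset (Fin n)).filter (fun x => ¬ x.val < m) with hbigs
    have hsub : G.edgeFinset.filter (fun z => ¬ P z) ⊆
        bigs.biUnion (fun x => G.incidenceFinset x) := by
      intro z hz
      rw [mem_filter] at hz
      obtain ⟨hze, hzP⟩ := hz
      have hzP' : ∃ x ∈ z, ¬ x.val < m := by
        by_contra hcon
        push_neg at hcon
        exact hzP hcon
      obtain ⟨x, hxz, hx⟩ := hzP'
      refine mem_biUnion.2 ⟨x, ?_, ?_⟩
      · rw [hbigs, mem_filter]; exact ⟨mem_univ _, by omega⟩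
      · rw [SimpleGraph.mem_incidenceFinset]
        exact ⟨(SimpleGraph.mem_edgeFinset.1 hze), hxz⟩
    have hbcard : bigs.card ≤ n - m := by
      have hcomp : ((univ : Finset (Fin n)).filter (fun x => x.val < m)).card + bigs.card
          = n := by
        rw [hbigs, card_filter_add_card_filter_not]
        simp
      rw [card_filter_lt m hmn] at hcomp
      omega
    calc (G.edgeFinset.filter (fun z => ¬ P z)).card
        ≤ (bigs.biUnion (fun x => G.incidenceFinset x)).card := card_le_card hsub
      _ ≤ ∑ x ∈ bigs, (G.incidenceFinset x).card := card_biUnion_le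
      _ ≤ ∑ _x ∈ bigs, n := by
          refine Finset.sum_le_sum ?_
          intro x _
          rw [SimpleGraph.card_incidenceFinset_eq_degree]
          calc G.degree x ≤ Fintype.card (Fin n) := by
                rw [← SimpleGraph.card_neighborFinset_eq_degree]
                exact card_le_univ _
            _ = n := Fintype.card_fin n
      _ = bigs.card * n := by rw [Finset.sum_const, smul_eq_mul]
      _ ≤ (n - m) * n := Nat.mul_le_mul_right n hbcard
  calc turanEdges n r = G.edgeFinset.card := rfl
    _ = (G.edgeFinset.filter P).card + (G.edgeFinset.filter (fun z => ¬ P z)).card :=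
        hsplit.symm
    _ ≤ turanEdges m r + (n - m) * n := Nat.add_le_add h1 h2

end Aux9

namespace Aux9

variable {n : ℕ}

lemma upper (s t : ℕ) (hs : 1 ≤ s) (ht : 3 ≤ t) (hn : s + t + 3 ≤ n)
    (H : Finset (Finset (Fin n))) (hU : Uniform3 H) (hC : ¬ HasCopy (JtEdges t) H)
    (hm : MatchingAtMost H s) :
    H.card ≤ s * turanEdges (n - s) (t - 1) + (22 * s * s + 21 * s) * n := by
  classical
  set K := 7 * s + 7 with hK
  set D := (univ : Finset (Fin n)).filter (fun v => K * n ≤ degH H v) with hD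
  set T := turanEdges (n - s) (t - 1) with hT
  -- Claim A : D.card ≤ s
  have hDcard : D.card ≤ s := by
    by_contra hcon
    push_neg at hcon
    obtain ⟨L, hLD, hLcard⟩ := Finset.exists_subset_card_eq (s := D) (n := s + 1) (by omega)
    obtain ⟨M', _, hM'H, hM'p, hM'c⟩ := greedy H hU K L ∅
      (fun v hv => (mem_filter.1 (hLD hv)).2)
      (empty_subset H) (by simp) (by simp) (by rw [Finset.card_empty, hLcard, hK]; omega)
    have := hm M' hM'H hM'p
    rw [hM'c, hLcard] at this
    omega
  -- degree bound
  have hdeg : ∀ v : Fin n, degH H v ≤ T + s * n := by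
    intro v
    have h1 := degH_le_turan ht H hU hC v
    have h2 := turanEdges_le (n := n) (t - 1) (n - s) (by omega) (by omega)
    have h3 : n - (n - s) = s := by omega
    rw [h3] at h2
    omega
  -- edges meeting D
  have hpart1 : (H.filter (fun e => ¬ ∀ x ∈ e, x ∉ D)).card ≤ s * T + s * s * n := by
    have hsub : H.filter (fun e => ¬ ∀ x ∈ e, x ∉ D) ⊆
        H.filter (fun e => ∃ v ∈ D, v ∈ e) := by
      intro e he
      rw [mem_filter] at he ⊢
      refine ⟨he.1, ?_⟩
      by_contra hcc
      push_neg at hcc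
      exact he.2 (fun x hx hxD => hcc x hxD hx)
    calc (H.filter (fun e => ¬ ∀ x ∈ e, x ∉ D)).card
        ≤ (H.filter (fun e => ∃ v ∈ D, v ∈ e)).card := card_le_card hsub
      _ ≤ ∑ v ∈ D, degH H v := edges_meeting_le H D
      _ ≤ ∑ _v ∈ D, (T + s * n) := Finset.sum_le_sum (fun v _ => hdeg v)
      _ = D.card * (T + s * n) := by rw [Finset.sum_const, smul_eq_mul]
      _ ≤ s * (T + s * n) := Nat.mul_le_mul_right _ hDcard
      _ = s * T + s * s * n := by ring
  -- edges avoiding D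
  set H' := H.filter (fun e => ∀ x ∈ e, x ∉ D) with hH'
  have hpart2 : H'.card ≤ 3 * s * (K * n) := by
    set cand := H'.powerset.filter
      (fun M : Finset (Finset (Fin n)) => (M : Set (Finset (Fin n))).Pairwise (fun e f => Disjoint e f)) with hcand
    have hcne : cand.Nonempty := by
      refine ⟨∅, ?_⟩
      rw [hcand, mem_filter, mem_powerset]
      exact ⟨empty_subset _, by simp⟩
    obtain ⟨M, hMc, hMmax⟩ := Finset.exists_max_image cand Finset.card hcne
    have hMH' : M ⊆ H' := mem_powerset.1 (mem_filter.1 hMc).1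
    have hMp : (M : Set (Finset (Fin n))).Pairwise (fun e f => Disjoint e f) :=
      (mem_filter.1 hMc).2
    have hMH : M ⊆ H := hMH'.trans (filter_subset _ _)
    set U := M.biUnion id with hUdef
    have hcover : ∀ e ∈ H', ∃ x ∈ e, x ∈ U := by
      intro e heH'
      by_contra hcc
      push_neg at hcc
      have heM : e ∉ M := by
        intro hcontra
        have hec : e.card = 3 := hU e (filter_subset _ _ heH')
        have hene : e.Nonempty := by rw [← card_pos, hec]; norm_num
        obtain ⟨x, hx⟩ := hene
        exact hcc x hx (mem_biUnion.2 ⟨e, hcontra, hx⟩)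
      have hins : insert e M ∈ cand := by
        rw [hcand, mem_filter, mem_powerset]
        refine ⟨insert_subset heH' hMH', ?_⟩
        rw [coe_insert]
        apply hMp.insert
        intro f hfM _
        have hd : Disjoint e f := by
          rw [Finset.disjoint_left]
          intro x hxe hxf
          exact hcc x hxe (mem_biUnion.2 ⟨f, hfM, hxf⟩)
        exact ⟨hd, hd.symm⟩
      have := hMmax (insert e M) hins
      rw [card_insert_of_notMem heM] at this
      omega
    have hUD : ∀ u ∈ U, u ∉ D := by
      intro u hu
      obtain ⟨f, hfM, huf⟩ := mem_biUnion.1 hu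
      exact (mem_filter.1 (hMH' hfM)).2 u huf
    have hUdeg : ∀ u ∈ U, degH H u ≤ K * n := by
      intro u hu
      have := hUD u hu
      rw [hD, mem_filter] at this
      push_neg at this
      exact le_of_lt (this (mem_univ u))
    have hUcard : U.card ≤ 3 * s := by
      have hMs : M.card ≤ s := hm M hMH hMp
      calc U.card ≤ ∑ f ∈ M, (id f).card := card_biUnion_le
        _ = ∑ _f ∈ M, 3 := Finset.sum_congr rfl (fun f hf => hU f (hMH hf))
        _ = 3 * M.card := by rw [Finset.sum_const, smul_eq_mul, Nat.mul_comm]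
        _ ≤ 3 * s := by omega
    have hsub : H' ⊆ U.biUnion (fun u => H.filter (fun e => u ∈ e)) := by
      intro e he
      obtain ⟨x, hxe, hxU⟩ := hcover e he
      exact mem_biUnion.2 ⟨x, hxU, mem_filter.2 ⟨filter_subset _ _ he, hxe⟩⟩
    calc H'.card ≤ (U.biUnion (fun u => H.filter (fun e => u ∈ e))).card := card_le_card hsub
      _ ≤ ∑ u ∈ U, degH H u := card_biUnion_le
      _ ≤ ∑ _u ∈ U, K * n := Finset.sum_le_sum (fun u hu => hUdeg u hu)
      _ = U.card * (K * n) := by rw [Finset.sum_const, smul_eq_mul]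
      _ ≤ 3 * s * (K * n) := Nat.mul_le_mul_right _ hUcard
  have hsplit : H'.card + (H.filter (fun e => ¬ ∀ x ∈ e, x ∉ D)).card = H.card :=
    card_filter_add_card_filter_not (p := fun e => ∀ x ∈ e, x ∉ D)
  have harith : s * s * n + 3 * s * (K * n) = (22 * s * s + 21 * s) * n := by
    rw [hK]; ring
  omega

end Aux9

namespace Aux9

variable {s t n : ℕ}

def iota (s : ℕ) {n : ℕ} (h : s ≤ n) : Fin (n - s) → Fin n :=
  fun a => ⟨s + a.val, by have := a.isLt; omega⟩

lemma iota_val {h : s ≤ n} (a : Fin (n - s)) : (iota s h a).val = s + a.val := rfl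

lemma iota_inj {h : s ≤ n} : Function.Injective (iota s h) := by
  intro a b hab
  have := congrArg Fin.val hab
  rw [iota_val, iota_val] at this
  exact Fin.ext (by omega)

lemma iota_large {h : s ≤ n} (a : Fin (n - s)) : ¬ (iota s h a).val < s := by
  rw [iota_val]; omega

def lowerH (s t : ℕ) {n : ℕ} (h : s ≤ n) : Finset (Finset (Fin n)) :=
  (((univ : Finset (Fin n)).filter (fun x => x.val < s)) ×ˢ
    (SimpleGraph.turanGraph (n - s) (t - 1)).edgeFinset).image
    (fun p => insert p.1 (pairFinset (p.2.map (iota s h))))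

lemma lowerH_struct {h : s ≤ n} {e : Finset (Fin n)} (he : e ∈ lowerH s t h) :
    ∃ v a b, v.val < s ∧ (SimpleGraph.turanGraph (n - s) (t - 1)).Adj a b ∧
      e = {v, iota s h a, iota s h b} := by
  obtain ⟨p, hp, rfl⟩ := mem_image.1 he
  obtain ⟨v, z⟩ := p
  rw [mem_product, mem_filter] at hp
  obtain ⟨⟨-, hv⟩, hz⟩ := hp
  revert hz
  induction z using Sym2.ind with
  | _ a b =>
    intro hz
    rw [SimpleGraph.mem_edgeFinset, SimpleGraph.mem_edgeSet] at hz
    exact ⟨v, a, b, hv, hz, by rw [Sym2.map_pair_eq, pairFinset_mk]⟩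

lemma lowerH_small_unique {h : s ≤ n} {v : Fin n} {a b : Fin (n - s)} (hv : v.val < s)
    {x : Fin n} (hx : x ∈ ({v, iota s h a, iota s h b} : Finset (Fin n)))
    (hxs : x.val < s) : x = v := by
  rcases mem_insert.1 hx with rfl | hx'
  · rfl
  · rcases mem_insert.1 hx' with rfl | hx''
    · exact absurd hxs (iota_large a)
    · rw [mem_singleton] at hx''
      subst hx''
      exact absurd hxs (iota_large b)

lemma lowerH_large {h : s ≤ n} {v : Fin n} {a b : Fin (n - s)}
    {x : Fin n} (hx : x ∈ ({v, iota s h a, iota s h b} : Finset (Fin n)))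
    (hxs : ¬ x.val < s) (hv : v.val < s) : x = iota s h a ∨ x = iota s h b := by
  rcases mem_insert.1 hx with rfl | hx'
  · exact absurd hv hxs
  · rcases mem_insert.1 hx' with rfl | hx''
    · exact Or.inl rfl
    · exact Or.inr (mem_singleton.1 hx'')

lemma lowerH_uniform {h : s ≤ n} : Uniform3 (lowerH s t h) := by
  intro e he
  obtain ⟨v, a, b, hv, hadj, rfl⟩ := lowerH_struct he
  have hab : a ≠ b := hadj.ne
  have h1 : iota s h a ≠ iota s h b := fun hh => hab (iota_inj hh)
  have h2 : v ≠ iota s h a := fun hh => iota_large a (hh ▸ hv)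
  have h3 : v ≠ iota s h b := fun hh => iota_large b (hh ▸ hv)
  rw [card_insert_of_notMem (by simp [h2, h3]), card_insert_of_notMem (by simp [h1]),
    card_singleton]

lemma lowerH_card {h : s ≤ n} :
    (lowerH s t h).card = s * turanEdges (n - s) (t - 1) := by
  classical
  rw [lowerH, card_image_of_injOn, card_product, card_filter_lt s h]
  · rfl
  · rintro ⟨v₁, z₁⟩ hp₁ ⟨v₂, z₂⟩ hp₂ heq
    rw [mem_coe, mem_product, mem_filter] at hp₁ hp₂
    revert heq
    induction z₁ using Sym2.ind with
    | _ a₁ b₁ =>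
    induction z₂ using Sym2.ind with
    | _ a₂ b₂ =>
    intro heq
    simp only [Sym2.map_pair_eq, pairFinset_mk] at heq
    have hv₁ : v₁.val < s := hp₁.1.2
    have hv₂ : v₂.val < s := hp₂.1.2
    have hz₁ : (SimpleGraph.turanGraph (n - s) (t - 1)).Adj a₁ b₁ := by
      have := hp₁.2
      rwa [SimpleGraph.mem_edgeFinset, SimpleGraph.mem_edgeSet] at this
    have heq' : ({v₁, iota s h a₁, iota s h b₁} : Finset (Fin n)) =
        {v₂, iota s h a₂, iota s h b₂} := heq
    have hvv : v₁ = v₂ := by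
      refine lowerH_small_unique (a := a₂) (b := b₂) (h := h) hv₂ ?_ hv₁
      rw [← heq']
      exact mem_insert_self _ _
    have hmema : iota s h a₁ ∈ ({v₂, iota s h a₂, iota s h b₂} : Finset (Fin n)) := by
      rw [← heq']; exact mem_insert_of_mem (mem_insert_self _ _)
    have hmemb : iota s h b₁ ∈ ({v₂, iota s h a₂, iota s h b₂} : Finset (Fin n)) := by
      rw [← heq']; exact mem_insert_of_mem (mem_insert_of_mem (mem_singleton_self _))
    have ha := lowerH_large hmema (iota_large a₁) hv₂
    have hb := lowerH_large hmemb (iota_large b₁) hv₂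
    have habne : iota s h a₁ ≠ iota s h b₁ := fun hh => hz₁.ne (iota_inj hh)
    have hzz : s(a₁, b₁) = s(a₂, b₂) := by
      rcases ha with ha | ha <;> rcases hb with hb | hb
      · exact absurd (ha.trans hb.symm) habne
      · exact Sym2.eq_iff.2 (Or.inl ⟨iota_inj ha, iota_inj hb⟩)
      · exact Sym2.eq_iff.2 (Or.inr ⟨iota_inj ha, iota_inj hb⟩)
      · exact absurd (ha.trans hb.symm) habne
    simp only [Prod.mk.injEq]
    exact ⟨hvv, hzz⟩

lemma lowerH_matching (hn : 1 ≤ n) {h : s ≤ n} : MatchingAtMost (lowerH s t h) s := by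
  classical
  intro M hM hMp
  calc M.card ≤ ((univ : Finset (Fin n)).filter (fun x => x.val < s)).card := by
        apply card_le_card_of_injOn
          (fun e => if hh : (e.filter (fun x : Fin n => x.val < s)).Nonempty
            then (e.filter (fun x : Fin n => x.val < s)).min' hh else ⟨0, hn⟩)
        · intro e heM
          obtain ⟨v, a, b, hv, hadj, rfl⟩ := lowerH_struct (hM heM)
          have hne : (({v, iota s h a, iota s h b} : Finset (Fin n)).filter
              (fun x => x.val < s)).Nonempty :=
            ⟨v, mem_filter.2 ⟨mem_insert_self _ _, hv⟩⟩
          rw [mem_coe]; dsimp only; rw [dif_pos hne]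
          have := (({v, iota s h a, iota s h b} : Finset (Fin n)).filter
              (fun x => x.val < s)).min'_mem hne
          rw [mem_filter] at this
          exact mem_filter.2 ⟨mem_univ _, this.2⟩
        · intro e₁ he₁ e₂ he₂ hfe
          by_contra hne
          have hd : Disjoint e₁ e₂ := hMp he₁ he₂ hne
          rw [mem_coe] at he₁ he₂
          obtain ⟨v₁, a₁, b₁, hv₁, _, rfl⟩ := lowerH_struct (hM he₁)
          obtain ⟨v₂, a₂, b₂, hv₂, _, rfl⟩ := lowerH_struct (hM he₂)
          have hne₁ : (({v₁, iota s h a₁, iota s h b₁} : Finset (Fin n)).filter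
              (fun x => x.val < s)).Nonempty :=
            ⟨v₁, mem_filter.2 ⟨mem_insert_self _ _, hv₁⟩⟩
          have hne₂ : (({v₂, iota s h a₂, iota s h b₂} : Finset (Fin n)).filter
              (fun x => x.val < s)).Nonempty :=
            ⟨v₂, mem_filter.2 ⟨mem_insert_self _ _, hv₂⟩⟩
          simp only [dif_pos hne₁, dif_pos hne₂] at hfe
          have hm₁ := Finset.min'_mem _ hne₁
          have hm₂ := Finset.min'_mem _ hne₂
          rw [mem_filter] at hm₁ hm₂
          rw [hfe] at hm₁
          exact (Finset.disjoint_left.1 hd (Finset.filter_subset (fun x : Fin n => x.val < s) _ (mem_filter.2 hm₁))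
            hm₂.1)
      _ = s := card_filter_lt s h

end Aux9

namespace Aux9

variable {s t n : ℕ}

set_option maxHeartbeats 2000000 in
lemma lowerH_free (hs : 1 ≤ s) (ht : 3 ≤ t) (hn : s + t + 3 ≤ n) (h : s ≤ n) :
    ¬ HasCopy (JtEdges t) (lowerH s t h) := by
  classical
  rintro ⟨f, finj, hf⟩
  have hsn : s < n := by omega
  have hedge : ∀ i j : Fin (t + 1), i ≠ 0 → j ≠ 0 → i ≠ j →
      ({f 0, f i, f j} : Finset (Fin n)) ∈ lowerH s t h := by
    intro i j hi hj hij
    have := hf {0, i, j} ⟨i, j, hi, hj, hij, rfl⟩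
    rwa [show ({0, i, j} : Finset (Fin (t + 1))).image f = {f 0, f i, f j} by
      simp [Finset.image_insert, Finset.image_singleton]] at this
  have huniq : ∀ i j : Fin (t + 1), i ≠ 0 → j ≠ 0 → i ≠ j →
      ∀ x y, x ∈ ({f 0, f i, f j} : Finset (Fin n)) →
        y ∈ ({f 0, f i, f j} : Finset (Fin n)) → x.val < s → y.val < s → x = y := by
    intro i j hi hj hij x y hx hy hxs hys
    obtain ⟨v, a, b, hv, hadj, heq⟩ := lowerH_struct (hedge i j hi hj hij)
    rw [heq] at hx hy
    rw [lowerH_small_unique hv hx hxs, lowerH_small_unique hv hy hys]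
  have hsmall : ∀ i j : Fin (t + 1), i ≠ 0 → j ≠ 0 → i ≠ j → ¬ (f 0).val < s →
      ((f i).val < s ∨ (f j).val < s) := by
    intro i j hi hj hij h0
    obtain ⟨v, a, b, hv, hadj, heq⟩ := lowerH_struct (hedge i j hi hj hij)
    have hvmem : v ∈ ({f 0, f i, f j} : Finset (Fin n)) := by
      rw [heq]; exact mem_insert_self _ _
    rcases mem_insert.1 hvmem with rfl | hv'
    · exact absurd hv h0
    · rcases mem_insert.1 hv' with rfl | hv''
      · exact Or.inl hv
      · rw [mem_singleton] at hv''
        exact Or.inr (hv'' ▸ hv)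
  set i1 : Fin (t + 1) := ⟨1, by omega⟩ with hi1
  set i2 : Fin (t + 1) := ⟨2, by omega⟩ with hi2
  set i3 : Fin (t + 1) := ⟨3, by omega⟩ with hi3
  have hne10 : i1 ≠ 0 := Fin.ne_of_val_ne (by simp [hi1])
  have hne20 : i2 ≠ 0 := Fin.ne_of_val_ne (by simp [hi2])
  have hne30 : i3 ≠ 0 := Fin.ne_of_val_ne (by simp [hi3])
  have hne12 : i1 ≠ i2 := Fin.ne_of_val_ne (by simp [hi1, hi2])
  have hne13 : i1 ≠ i3 := Fin.ne_of_val_ne (by simp [hi1, hi3])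
  have hne23 : i2 ≠ i3 := Fin.ne_of_val_ne (by simp [hi2, hi3])
  by_cases h0 : (f 0).val < s
  · -- center is small: the other vertices form a K_t in the Turán graph
    have hlarge : ∀ i : Fin (t + 1), i ≠ 0 → ¬ (f i).val < s := by
      intro i hi his
      set j := if i = i1 then i2 else i1 with hjd
      have hj0 : j ≠ 0 := by
        rw [hjd]; split <;> assumption
      have hji : j ≠ i := by
        rw [hjd]; split
        · rename_i hh; rw [hh]; exact hne12.symm
        · rename_i hh; exact fun hc => hh hc.symm
      have := huniq i j hi hj0 (fun hc => hji hc.symm) (f 0) (f i)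
        (mem_insert_self _ _) (mem_insert_of_mem (mem_insert_self _ _)) h0 his
      exact hi (finj this).symm
    have hadj2 : ∀ i j : Fin (t + 1), i ≠ 0 → j ≠ 0 → i ≠ j →
        ∃ a b, f i = iota s h a ∧ f j = iota s h b ∧
          (SimpleGraph.turanGraph (n - s) (t - 1)).Adj a b := by
      intro i j hi hj hij
      obtain ⟨v, a, b, hv, hadj, heq⟩ := lowerH_struct (hedge i j hi hj hij)
      have hxi : f i ∈ ({v, iota s h a, iota s h b} : Finset (Fin n)) := by
        rw [← heq]; exact mem_insert_of_mem (mem_insert_self _ _)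
      have hxj : f j ∈ ({v, iota s h a, iota s h b} : Finset (Fin n)) := by
        rw [← heq]; exact mem_insert_of_mem (mem_insert_of_mem (mem_singleton_self _))
      have hfij : f i ≠ f j := fun hc => hij (finj hc)
      rcases lowerH_large hxi (hlarge i hi) hv with hia | hia <;>
        rcases lowerH_large hxj (hlarge j hj) hv with hjb | hjb
      · exact absurd (hia.trans hjb.symm) hfij
      · exact ⟨a, b, hia, hjb, hadj⟩
      · exact ⟨b, a, hia, hjb, hadj.symm⟩
      · exact absurd (hia.trans hjb.symm) hfij
    set u : Fin n → Fin (n - s) := fun x => ⟨x.val - s, by have := x.isLt; omega⟩ with hu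
    have hiu : ∀ x : Fin n, ¬ x.val < s → iota s h (u x) = x := by
      intro x hx
      apply Fin.ext
      rw [iota_val, show (u x).val = x.val - s from rfl]
      omega
    have huiota : ∀ a : Fin (n - s), u (iota s h a) = a := by
      intro a
      apply Fin.ext
      rw [show (u (iota s h a)).val = (iota s h a).val - s from rfl, iota_val]
      omega
    obtain ⟨Q, hQ⟩ : ∃ Q : Finset (Fin (n - s)),
        Q = ((univ : Finset (Fin (t + 1))).erase 0).image (fun i => u (f i)) := ⟨_, rfl⟩
    have hinjQ : Set.InjOn (fun i => u (f i)) ((univ : Finset (Fin (t + 1))).erase 0) := by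
      intro i hi j hj hij
      rw [mem_coe, mem_erase] at hi hj
      have h1 : f i = f j := by
        rw [← hiu (f i) (hlarge i hi.1), ← hiu (f j) (hlarge j hj.1)]
        exact congrArg (iota s h) hij
      exact finj h1
    have hQcard : Q.card = t := by
      rw [hQ, card_image_of_injOn hinjQ, card_erase_of_mem (mem_univ _), card_univ,
        Fintype.card_fin]
      omega
    have hclique : (SimpleGraph.turanGraph (n - s) (t - 1)).IsNClique t Q := by
      refine ⟨?_, hQcard⟩
      intro x hx y hy hxy
      rw [mem_coe, hQ, mem_image] at hx hy
      obtain ⟨i, hi, rfl⟩ := hx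
      obtain ⟨j, hj, rfl⟩ := hy
      rw [mem_erase] at hi hj
      have hij : i ≠ j := fun hc => hxy (by rw [hc])
      obtain ⟨a, b, hia, hjb, hadj⟩ := hadj2 i j hi.1 hj.1 hij
      have hxa : u (f i) = a := by rw [hia, huiota]
      have hyb : u (f j) = b := by rw [hjb, huiota]
      rw [hxa, hyb]
      exact hadj
    have hcf := SimpleGraph.turanGraph_cliqueFree (n := n - s) (r := t - 1) (by omega)
    rw [show t - 1 + 1 = t by omega] at hcf
    exact hcf Q hclique
  · -- center is large: parity contradiction among f i1, f i2, f i3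
    have hone : ∀ i j : Fin (t + 1), i ≠ 0 → j ≠ 0 → i ≠ j →
        ¬ ((f i).val < s ∧ (f j).val < s) := by
      rintro i j hi hj hij ⟨hfi, hfj⟩
      have := huniq i j hi hj hij (f i) (f j)
        (mem_insert_of_mem (mem_insert_self _ _))
        (mem_insert_of_mem (mem_insert_of_mem (mem_singleton_self _))) hfi hfj
      exact hij (finj this)
    have h12 := hsmall i1 i2 hne10 hne20 hne12 h0
    have h13 := hsmall i1 i3 hne10 hne30 hne13 h0
    have h23 := hsmall i2 i3 hne20 hne30 hne23 h0
    have h12' := hone i1 i2 hne10 hne20 hne12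
    have h13' := hone i1 i3 hne10 hne30 hne13
    have h23' := hone i2 i3 hne20 hne30 hne23
    tauto

end Aux9


theorem stmt_9 (s t : ℕ) (hs : 1 ≤ s) (ht : 3 ≤ t) :
    ∃ C n₀ : ℕ, ∀ n ≥ n₀,
      (∀ H : Finset (Finset (Fin n)), Uniform3 H → ¬ HasCopy (JtEdges t) H →
          MatchingAtMost H s → H.card ≤ s * turanEdges (n - s) (t - 1) + C * n) ∧
      (∃ H : Finset (Finset (Fin n)), Uniform3 H ∧ ¬ HasCopy (JtEdges t) H ∧
          MatchingAtMost H s ∧ s * turanEdges (n - s) (t - 1) ≤ H.card + C * n) := by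
  refine ⟨22 * s * s + 21 * s, s + t + 3, ?_⟩
  intro n hn
  have h : s ≤ n := by omega
  constructor
  · intro H hU hC hm
    exact Aux9.upper s t hs ht hn H hU hC hm
  · refine ⟨Aux9.lowerH s t h, Aux9.lowerH_uniform, Aux9.lowerH_free hs ht (by omega) h,
      Aux9.lowerH_matching (by omega), ?_⟩
    rw [Aux9.lowerH_card]
    omega
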